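/- arXiv:0710.5305 — 2 statements merged into one kernel-verified Lean document; each statement's English description precedes it below -/
import Mathlib

section
/- Let k, g, α : ℝ × [0,T) → ℝ be smooth functions, 1-periodic in u, with g > 0, let ∂_s = (1/g) ∂_u, and set β = −∂_s² k − (1/2) k³. Assume ∂_t k = ∂_s² β + α ∂_s k + k² β and ∂_t g = −g k β + g ∂_s α. Then the elastic energy E(t) = (1/2) ∫₀¹ k² g du satisfies dE/dt = −∫₀¹ β² g du ≤ 0; i.e. the flow with normal velocity β = −∂_s²k − (1/2)k³ is a gradient flow for E and E is nonincreasing in time. -/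
open MeasureTheory intervalIntegral Set Function


/-- The arclength derivative `∂_s f = (1/g) ∂_u f` associated with a local
length element `g`. -/
noncomputable def arcDeriv (g f : ℝ → ℝ) : ℝ → ℝ := fun u => deriv f u / g u

open MeasureTheory intervalIntegral Set Function

lemma periodic_deriv' {f : ℝ → ℝ} (hp : Function.Periodic f 1) :
    Function.Periodic (deriv f) 1 := by
  intro x
  have : (fun y => f (y + 1)) = f := funext hp
  calc deriv f (x + 1) = deriv (fun y => f (y + 1)) x := (deriv_comp_add_const f 1 x).symm
  _ = deriv f x := by rw [this]

lemma int_deriv_periodic {f : ℝ → ℝ} (hf : ContDiff ℝ (⊤ : ℕ∞) f)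
    (hp : Function.Periodic f 1) : ∫ u in (0:ℝ)..1, deriv f u = 0 := by
  rw [intervalIntegral.integral_deriv_eq_sub (fun x _ => hf.differentiable (by simp) x)
    (((contDiff_infty_iff_deriv.mp hf).2.continuous).intervalIntegrable 0 1)]
  have := hp 0
  simp at this
  simp [this]

lemma ibp_periodic {f h : ℝ → ℝ} (hf : ContDiff ℝ (⊤ : ℕ∞) f) (hh : ContDiff ℝ (⊤ : ℕ∞) h)
    (hpf : Function.Periodic f 1) (hph : Function.Periodic h 1) :
    ∫ u in (0:ℝ)..1, deriv f u * h u = -∫ u in (0:ℝ)..1, f u * deriv h u := by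
  have hfh : ContDiff ℝ (⊤ : ℕ∞) (fun u => f u * h u) := hf.mul hh
  have h0 := int_deriv_periodic hfh (hpf.mul hph)
  have hcongr : ∀ u : ℝ, deriv (fun u => f u * h u) u = deriv f u * h u + f u * deriv h u := by
    intro u
    exact deriv_fun_mul (hf.differentiable (by simp) u) (hh.differentiable (by simp) u)
  rw [intervalIntegral.integral_congr (fun u _ => hcongr u)] at h0
  have i1 : IntervalIntegrable (fun u => deriv f u * h u) volume 0 1 :=
    (((contDiff_infty_iff_deriv.mp hf).2.continuous).mul hh.continuous).intervalIntegrable 0 1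
  have i2 : IntervalIntegrable (fun u => f u * deriv h u) volume 0 1 :=
    (hf.continuous.mul ((contDiff_infty_iff_deriv.mp hh).2.continuous)).intervalIntegrable 0 1
  rw [intervalIntegral.integral_add i1 i2] at h0
  linarith

lemma arcDeriv_contDiff {G f : ℝ → ℝ} (hG : ContDiff ℝ (⊤ : ℕ∞) G) (hGne : ∀ u, G u ≠ 0)
    (hf : ContDiff ℝ (⊤ : ℕ∞) f) : ContDiff ℝ (⊤ : ℕ∞) (arcDeriv G f) :=
  ((contDiff_infty_iff_deriv.mp hf).2).div hG hGne

lemma arcDeriv_periodic {G f : ℝ → ℝ} (hf : Function.Periodic f 1)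
    (hG : Function.Periodic G 1) : Function.Periodic (arcDeriv G f) 1 :=
  (periodic_deriv' hf).div hG

lemma key_computation (K G A B DK DG : ℝ → ℝ)
    (hKc : ContDiff ℝ (⊤ : ℕ∞) K) (hGc : ContDiff ℝ (⊤ : ℕ∞) G)
    (hAc : ContDiff ℝ (⊤ : ℕ∞) A)
    (hGpos : ∀ u, 0 < G u)
    (hKp : Function.Periodic K 1) (hGp : Function.Periodic G 1)
    (hAp : Function.Periodic A 1)
    (hBdef : ∀ u, B u = -(arcDeriv G (arcDeriv G K) u) - (1 / 2 : ℝ) * K u ^ 3)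
    (hDK : ∀ u, DK u = arcDeriv G (arcDeriv G B) u + A u * arcDeriv G K u + K u ^ 2 * B u)
    (hDG : ∀ u, DG u = -G u * K u * B u + G u * arcDeriv G A u) :
    (1 / 2 : ℝ) * (∫ u in (0:ℝ)..1, (2 * K u * DK u) * G u + K u ^ 2 * DG u)
      = -(∫ u in (0:ℝ)..1, B u ^ 2 * G u) := by
  have hGne : ∀ u, G u ≠ 0 := fun u => (hGpos u).ne'
  set SK := arcDeriv G K with hSK
  set SB := arcDeriv G B with hSBdef
  have hSKc : ContDiff ℝ (⊤ : ℕ∞) SK := arcDeriv_contDiff hGc hGne hKc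
  have hBfun : B = fun u => -(arcDeriv G SK u) - (1 / 2 : ℝ) * K u ^ 3 := funext hBdef
  have hBc : ContDiff ℝ (⊤ : ℕ∞) B := by
    rw [hBfun]
    exact ((arcDeriv_contDiff hGc hGne hSKc).neg).sub (contDiff_const.mul (hKc.pow 3))
  have hSBc : ContDiff ℝ (⊤ : ℕ∞) SB := arcDeriv_contDiff hGc hGne hBc
  have hSKp : Function.Periodic SK 1 := arcDeriv_periodic hKp hGp
  have hBp : Function.Periodic B 1 := by
    rw [hBfun]
    intro x
    simp only [arcDeriv_periodic hSKp hGp x, hKp x]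
  have hSBp : Function.Periodic SB 1 := arcDeriv_periodic hBp hGp
  -- continuity facts
  have cK := hKc.continuous
  have cG := hGc.continuous
  have cA := hAc.continuous
  have cB := hBc.continuous
  have cK' : Continuous (deriv K) := (contDiff_infty_iff_deriv.mp hKc).2.continuous
  have cB' : Continuous (deriv B) := (contDiff_infty_iff_deriv.mp hBc).2.continuous
  have cSK := hSKc.continuous
  have cSB := hSBc.continuous
  have cSK' : Continuous (deriv SK) := (contDiff_infty_iff_deriv.mp hSKc).2.continuous
  have cSB' : Continuous (deriv SB) := (contDiff_infty_iff_deriv.mp hSBc).2.continuous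
  have hAK2c : ContDiff ℝ (⊤ : ℕ∞) (fun v => A v * K v ^ 2) := hAc.mul (hKc.pow 2)
  have cAK2' : Continuous (deriv (fun v => A v * K v ^ 2)) :=
    (contDiff_infty_iff_deriv.mp hAK2c).2.continuous
  -- pointwise identity on the integrand
  have hpt : ∀ u : ℝ, (2 * K u * DK u) * G u + K u ^ 2 * DG u
      = (2 * K u * deriv SB u + deriv (fun v => A v * K v ^ 2) u) + K u ^ 3 * B u * G u := by
    intro u
    have hAK2d : deriv (fun v => A v * K v ^ 2) u
        = deriv A u * K u ^ 2 + A u * (2 * K u * deriv K u) := by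
      have h1 : HasDerivAt (fun v => A v * K v ^ 2)
          (deriv A u * K u ^ 2 + A u * ((2 : ℕ) * K u ^ (2 - 1) * deriv K u)) u :=
        ((hAc.differentiable (by simp) u).hasDerivAt).mul
          (((hKc.differentiable (by simp) u).hasDerivAt).pow 2)
      rw [h1.deriv]
      norm_num
    rw [hDK u, hDG u, hAK2d]
    simp only [hSK, hSBdef, arcDeriv]
    field_simp [hGne u]
    ring
  rw [intervalIntegral.integral_congr (fun u _ => hpt u)]
  -- integrability
  have i1 : IntervalIntegrable (fun u => 2 * K u * deriv SB u) volume 0 1 :=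
    ((continuous_const.mul cK).mul cSB').intervalIntegrable 0 1
  have i2 : IntervalIntegrable (deriv (fun v => A v * K v ^ 2)) volume 0 1 :=
    cAK2'.intervalIntegrable 0 1
  have i3 : IntervalIntegrable (fun u => K u ^ 3 * B u * G u) volume 0 1 :=
    (((cK.pow 3).mul cB).mul cG).intervalIntegrable 0 1
  rw [intervalIntegral.integral_add (i1.add i2) i3, intervalIntegral.integral_add i1 i2]
  -- ∫ deriv (A K²) = 0
  have hAK2p : Function.Periodic (fun v => A v * K v ^ 2) 1 := by
    intro x; simp only [hAp x, hKp x]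
  have e2 : ∫ u in (0:ℝ)..1, deriv (fun v => A v * K v ^ 2) u = 0 :=
    int_deriv_periodic hAK2c hAK2p
  -- the double integration by parts
  have e1 : ∫ u in (0:ℝ)..1, 2 * K u * deriv SB u
      = 2 * ∫ u in (0:ℝ)..1, B u * deriv SK u := by
    have s1 : ∫ u in (0:ℝ)..1, 2 * K u * deriv SB u
        = 2 * ∫ u in (0:ℝ)..1, deriv SB u * K u := by
      rw [← intervalIntegral.integral_const_mul]
      exact intervalIntegral.integral_congr (fun u _ => by ring)
    have s2 : ∫ u in (0:ℝ)..1, deriv SB u * K u = -∫ u in (0:ℝ)..1, SB u * deriv K u :=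
      ibp_periodic hSBc hKc hSBp hKp
    have s3 : ∫ u in (0:ℝ)..1, SB u * deriv K u = ∫ u in (0:ℝ)..1, deriv B u * SK u := by
      refine intervalIntegral.integral_congr (fun u _ => ?_)
      simp only [hSBdef, hSK, arcDeriv]
      ring
    have s4 : ∫ u in (0:ℝ)..1, deriv B u * SK u = -∫ u in (0:ℝ)..1, B u * deriv SK u :=
      ibp_periodic hBc hSKc hBp hSKp
    rw [s1, s2, s3, s4, neg_neg]
  rw [e1, e2]
  -- final pointwise identity
  have e3 : ∀ u : ℝ, 2 * (B u * deriv SK u) + K u ^ 3 * B u * G u = -2 * (B u ^ 2 * G u) := by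
    intro u
    have hSK' : deriv SK u = (-B u - (1 / 2 : ℝ) * K u ^ 3) * G u := by
      have h := hBdef u
      simp only [arcDeriv] at h
      have h2 : deriv SK u / G u = -B u - (1 / 2 : ℝ) * K u ^ 3 := by linarith
      rw [div_eq_iff (hGne u)] at h2
      exact h2
    rw [hSK']
    ring
  have e4 : (2 : ℝ) * ∫ u in (0:ℝ)..1, B u * deriv SK u
      = ∫ u in (0:ℝ)..1, 2 * (B u * deriv SK u) :=
    (intervalIntegral.integral_const_mul 2 _).symm
  have i4 : IntervalIntegrable (fun u => 2 * (B u * deriv SK u)) volume 0 1 :=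
    (continuous_const.mul (cB.mul cSK')).intervalIntegrable 0 1
  have e5 : (∫ u in (0:ℝ)..1, 2 * (B u * deriv SK u)) + ∫ u in (0:ℝ)..1, K u ^ 3 * B u * G u
      = ∫ u in (0:ℝ)..1, -2 * (B u ^ 2 * G u) := by
    rw [← intervalIntegral.integral_add i4 i3]
    exact intervalIntegral.integral_congr (fun u _ => e3 u)
  have e6 : ∫ u in (0:ℝ)..1, -2 * (B u ^ 2 * G u)
      = -2 * ∫ u in (0:ℝ)..1, B u ^ 2 * G u :=
    intervalIntegral.integral_const_mul _ _
  rw [e4, add_zero, e5, e6]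
  ring


lemma slice_contDiff {f : ℝ → ℝ → ℝ} (hf : ContDiff ℝ (⊤ : ℕ∞) (Function.uncurry f)) (t : ℝ) :
    ContDiff ℝ (⊤ : ℕ∞) (fun u => f u t) :=
  hf.comp (contDiff_id.prodMk contDiff_const)

lemma hasDerivAt_slice {f : ℝ → ℝ → ℝ} (hf : ContDiff ℝ (⊤ : ℕ∞) (Function.uncurry f))
    (u x : ℝ) :
    HasDerivAt (fun τ => f u τ) (fderiv ℝ (Function.uncurry f) (u, x) (0, 1)) x := by
  have h1 : HasDerivAt (fun τ : ℝ => ((u, τ) : ℝ × ℝ)) ((0:ℝ), (1:ℝ)) x :=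
    (hasDerivAt_const x u).prodMk (hasDerivAt_id x)
  exact (hf.differentiable (by simp) (u, x)).hasFDerivAt.comp_hasDerivAt x h1

lemma cont_Dslice {f : ℝ → ℝ → ℝ} (hf : ContDiff ℝ (⊤ : ℕ∞) (Function.uncurry f)) :
    Continuous (fun p : ℝ × ℝ => fderiv ℝ (Function.uncurry f) p (0, 1)) :=
  (hf.continuous_fderiv (by simp)).clm_apply continuous_const

/-- For an evolving family of closed plane curves with curvature `k`, local
length element `g > 0` and tangential velocity `α` (smooth, 1-periodic in `u`),
with the Willmore normal velocity `β = −∂_s²k − (1/2)k³`, and satisfying the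
evolution equations `∂_t k = ∂_s²β + α ∂_s k + k²β`, `∂_t g = −gkβ + g ∂_s α`,
the elastic energy `E(t) = (1/2)∫₀¹ k² g du` satisfies
`dE/dt = −∫₀¹ β² g du ≤ 0`: the Willmore flow is a gradient flow for `E`
and `E` is nonincreasing in time. -/
theorem willmore_flow_is_gradient_flow
    (T : ℝ) (hT : 0 < T) (k g α : ℝ → ℝ → ℝ)
    (hk : ContDiff ℝ (⊤ : ℕ∞) (Function.uncurry k))
    (hg : ContDiff ℝ (⊤ : ℕ∞) (Function.uncurry g))
    (hα : ContDiff ℝ (⊤ : ℕ∞) (Function.uncurry α))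
    (hkper : ∀ t, Function.Periodic (fun u => k u t) 1)
    (hgper : ∀ t, Function.Periodic (fun u => g u t) 1)
    (hαper : ∀ t, Function.Periodic (fun u => α u t) 1)
    (hgpos : ∀ u t, 0 < g u t)
    (β : ℝ → ℝ → ℝ)
    (hβdef : ∀ u t, β u t =
      -(arcDeriv (fun v => g v t) (arcDeriv (fun v => g v t) (fun v => k v t)) u)
        - (1 / 2 : ℝ) * (k u t) ^ 3)
    (heqk : ∀ u : ℝ, ∀ t ∈ Set.Ico (0:ℝ) T,
      deriv (fun τ => k u τ) t =
        arcDeriv (fun v => g v t) (arcDeriv (fun v => g v t) (fun v => β v t)) u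
          + α u t * arcDeriv (fun v => g v t) (fun v => k v t) u
          + (k u t) ^ 2 * β u t)
    (heqg : ∀ u : ℝ, ∀ t ∈ Set.Ico (0:ℝ) T,
      deriv (fun τ => g u τ) t =
        - g u t * k u t * β u t
          + g u t * arcDeriv (fun v => g v t) (fun v => α v t) u) :
    ∀ t ∈ Set.Ioo (0:ℝ) T,
      HasDerivAt (fun τ => (1 / 2 : ℝ) * ∫ u in (0:ℝ)..1, (k u τ) ^ 2 * g u τ)
        (-(∫ u in (0:ℝ)..1, (β u t) ^ 2 * g u t)) t ∧
      -(∫ u in (0:ℝ)..1, (β u t) ^ 2 * g u t) ≤ 0 := by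

  intro t ht
  obtain ⟨ht0, htT⟩ := ht
  have htIco : t ∈ Set.Ico (0:ℝ) T := ⟨le_of_lt ht0, htT⟩
  set Dk : ℝ → ℝ → ℝ := fun u x => fderiv ℝ (Function.uncurry k) (u, x) (0, 1) with hDkdef
  set Dg : ℝ → ℝ → ℝ := fun u x => fderiv ℝ (Function.uncurry g) (u, x) (0, 1) with hDgdef
  have hku : ∀ u x, HasDerivAt (fun τ => k u τ) (Dk u x) x := fun u x => hasDerivAt_slice hk u x
  have hgu : ∀ u x, HasDerivAt (fun τ => g u τ) (Dg u x) x := fun u x => hasDerivAt_slice hg u x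
  set F' : ℝ → ℝ → ℝ := fun x u => (2 * k u x * Dk u x) * g u x + k u x ^ 2 * Dg u x with hF'def
  have hF : ∀ u x, HasDerivAt (fun τ => k u τ ^ 2 * g u τ) (F' x u) x := by
    intro u x
    have h := ((hku u x).fun_pow 2).fun_mul (hgu u x)
    refine h.congr_deriv ?_
    rw [hF'def]
    push_cast
    ring
  -- joint continuity of F'
  have hCk : Continuous (fun p : ℝ × ℝ => k p.1 p.2) := hk.continuous
  have hCg : Continuous (fun p : ℝ × ℝ => g p.1 p.2) := hg.continuous
  have hCDk : Continuous (fun p : ℝ × ℝ => Dk p.1 p.2) := by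
    have := cont_Dslice hk
    simpa [hDkdef] using this
  have hCDg : Continuous (fun p : ℝ × ℝ => Dg p.1 p.2) := by
    have := cont_Dslice hg
    simpa [hDgdef] using this
  have hF'c : Continuous (fun p : ℝ × ℝ => F' p.2 p.1) := by
    simp only [hF'def]
    exact (((continuous_const.mul hCk).mul hCDk).mul hCg).add ((hCk.pow 2).mul hCDg)
  -- bound on a compact set
  obtain ⟨C, hC⟩ :=
    ((isCompact_Icc.prod isCompact_Icc) :
        IsCompact ((Set.Icc (0:ℝ) 1) ×ˢ Set.Icc (t - 1) (t + 1))).exists_bound_of_continuousOn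
      hF'c.continuousOn
  have h_bound : ∀ᵐ u ∂(volume : Measure ℝ), u ∈ Set.uIoc (0:ℝ) 1 →
      ∀ x ∈ Metric.ball t 1, ‖F' x u‖ ≤ C := by
    refine Filter.Eventually.of_forall (fun u hu x hx => ?_)
    have hu' : u ∈ Set.Icc (0:ℝ) 1 := by
      rw [Set.uIoc_of_le zero_le_one] at hu
      exact Set.Ioc_subset_Icc_self hu
    have hx' : x ∈ Set.Icc (t - 1) (t + 1) := by
      have hd := Metric.mem_ball.mp hx
      rw [Real.dist_eq] at hd
      have := abs_lt.mp hd
      exact ⟨by linarith [this.1], by linarith [this.2]⟩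
    exact hC (u, x) ⟨hu', hx'⟩
  have h_diff : ∀ᵐ u ∂(volume : Measure ℝ), u ∈ Set.uIoc (0:ℝ) 1 →
      ∀ x ∈ Metric.ball t 1, HasDerivAt (fun x => k u x ^ 2 * g u x) (F' x u) x :=
    Filter.Eventually.of_forall (fun u _ x _ => hF u x)
  have hF_meas : ∀ᶠ x in nhds t,
      AEStronglyMeasurable (fun u => k u x ^ 2 * g u x)
        ((volume : Measure ℝ).restrict (Set.uIoc (0:ℝ) 1)) := by
    refine Filter.Eventually.of_forall (fun x => ?_)
    exact ((((slice_contDiff hk x).continuous).pow 2).mul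
      (slice_contDiff hg x).continuous).aestronglyMeasurable
  have hF_int : IntervalIntegrable (fun u => k u t ^ 2 * g u t) volume 0 1 :=
    ((((slice_contDiff hk t).continuous).pow 2).mul
      (slice_contDiff hg t).continuous).intervalIntegrable 0 1
  have hF'_meas : AEStronglyMeasurable (F' t)
      ((volume : Measure ℝ).restrict (Set.uIoc (0:ℝ) 1)) := by
    have : Continuous (fun u => F' t u) :=
      hF'c.comp (continuous_id.prodMk continuous_const)
    exact this.aestronglyMeasurable
  obtain ⟨-, hD⟩ :=
    intervalIntegral.hasDerivAt_integral_of_dominated_loc_of_deriv_le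
      (F := fun x u => k u x ^ 2 * g u x) (F' := F') (x₀ := t) (bound := fun _ => C)
      (a := 0) (b := 1) (Metric.ball_mem_nhds t one_pos) hF_meas hF_int hF'_meas h_bound
      (intervalIntegrable_const) h_diff
  have hE := hD.const_mul (1 / 2 : ℝ)
  -- now identify the derivative value
  have hkey : (1 / 2 : ℝ) * ∫ u in (0:ℝ)..1, F' t u
      = -(∫ u in (0:ℝ)..1, β u t ^ 2 * g u t) := by
    have hβc : ∀ u, β u t = -(arcDeriv (fun v => g v t) (arcDeriv (fun v => g v t)
        (fun v => k v t)) u) - (1 / 2 : ℝ) * k u t ^ 3 := fun u => hβdef u t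
    have hDkt : ∀ u, Dk u t = arcDeriv (fun v => g v t) (arcDeriv (fun v => g v t)
        (fun v => β v t)) u + α u t * arcDeriv (fun v => g v t) (fun v => k v t) u
        + k u t ^ 2 * β u t := by
      intro u
      rw [← (hku u t).deriv]
      exact heqk u t htIco
    have hDgt : ∀ u, Dg u t = -g u t * k u t * β u t
        + g u t * arcDeriv (fun v => g v t) (fun v => α v t) u := by
      intro u
      rw [← (hgu u t).deriv]
      exact heqg u t htIco
    exact key_computation (fun u => k u t) (fun u => g u t) (fun u => α u t)
      (fun u => β u t) (fun u => Dk u t) (fun u => Dg u t)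
      (slice_contDiff hk t) (slice_contDiff hg t) (slice_contDiff hα t)
      (fun u => hgpos u t) (hkper t) (hgper t) (hαper t) hβc hDkt hDgt
  constructor
  · rw [← hkey]
    exact hE
  · have hnn : (0:ℝ) ≤ ∫ u in (0:ℝ)..1, β u t ^ 2 * g u t := by
      apply intervalIntegral.integral_nonneg zero_le_one
      intro u _
      exact mul_nonneg (sq_nonneg _) (le_of_lt (hgpos u t))
    linarith
end

section
/- Let x : ℝ × [0,T) → ℝ² be a smooth family of curves, 1-periodic in u, with g = |∂_u x| > 0, arclength derivative ∂_s = (1/g)∂_u, unit tangent T = ∂_s x, unit normal N equal to T rotated by +π/2, and signed curvature k = ∂_s x ∧ ∂_s² x. Let α : ℝ × [0,T) → ℝ be smooth and 1-periodic in u. Then at every point, ∂_t x = (−∂_s² k − (1/2) k³) N + α T holds if and only if ∂_t x = −∂_s⁴ x − (3/2) ∂_s(k² ∂_s x) + α ∂_s x holds. -/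
/-- The signed curvature `k = ∂_s x ∧ ∂_s² x` of a plane curve with
components `X₁, X₂` and local length element `g`. -/
noncomputable def signedCurv (g X₁ X₂ : ℝ → ℝ) : ℝ → ℝ :=
  fun u => arcDeriv g X₁ u * arcDeriv g (arcDeriv g X₂) u
    - arcDeriv g X₂ u * arcDeriv g (arcDeriv g X₁) u

lemma smooth_arc {G f : ℝ → ℝ} (hG : ContDiff ℝ (⊤ : ℕ∞) G) (hG0 : ∀ v, G v ≠ 0)
    (hf : ContDiff ℝ (⊤ : ℕ∞) f) : ContDiff ℝ (⊤ : ℕ∞) (arcDeriv G f) := by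
  have hf' : ContDiff ℝ (⊤ : ℕ∞) (deriv f) := (contDiff_infty_iff_deriv.mp hf).2
  exact hf'.div hG hG0

lemma arc_neg {G f : ℝ → ℝ} {v : ℝ} :
    arcDeriv G (fun w => -f w) v = -arcDeriv G f v := by
  simp [arcDeriv, neg_div]

lemma arc_mul {G f h : ℝ → ℝ} {v : ℝ} (hf : DifferentiableAt ℝ f v)
    (hh : DifferentiableAt ℝ h v) :
    arcDeriv G (fun w => f w * h w) v = f v * arcDeriv G h v + h v * arcDeriv G f v := by
  simp only [arcDeriv, deriv_fun_mul hf hh]; ring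

lemma arc_add {G f h : ℝ → ℝ} {v : ℝ} (hf : DifferentiableAt ℝ f v)
    (hh : DifferentiableAt ℝ h v) :
    arcDeriv G (fun w => f w + h w) v = arcDeriv G f v + arcDeriv G h v := by
  simp only [arcDeriv, deriv_fun_add hf hh]; ring

lemma arc_sq {G f : ℝ → ℝ} {v : ℝ} (hf : DifferentiableAt ℝ f v) :
    arcDeriv G (fun w => f w ^ 2) v = 2 * f v * arcDeriv G f v := by
  simp only [arcDeriv, deriv_fun_pow hf 2]; push_cast; ring

lemma arc_key (G X₁ X₂ K : ℝ → ℝ)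
    (hGs : ContDiff ℝ (⊤ : ℕ∞) G)
    (hX₁s : ContDiff ℝ (⊤ : ℕ∞) X₁) (hX₂s : ContDiff ℝ (⊤ : ℕ∞) X₂)
    (hGpos : ∀ v, 0 < G v)
    (hGsq : ∀ v, G v ^ 2 = deriv X₁ v ^ 2 + deriv X₂ v ^ 2)
    (hK : K = signedCurv G X₁ X₂) (u : ℝ) :
    -(arcDeriv G (arcDeriv G (arcDeriv G (arcDeriv G X₁))) u)
      - (3 / 2 : ℝ) * arcDeriv G (fun v => (K v) ^ 2 * arcDeriv G X₁ v) u
    = (-(arcDeriv G (arcDeriv G K) u) - (1 / 2 : ℝ) * (K u) ^ 3)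
        * (-(arcDeriv G X₂ u)) := by
  have hG0 : ∀ v, G v ≠ 0 := fun v => (hGpos v).ne'
  have hle : ((1 : ℕ∞) : WithTop ℕ∞) ≤ ((⊤ : ℕ∞) : WithTop ℕ∞) := by
    exact_mod_cast le_top
  set T₁ : ℝ → ℝ := arcDeriv G X₁ with hT₁def
  set T₂ : ℝ → ℝ := arcDeriv G X₂ with hT₂def
  have hT₁s : ContDiff ℝ (⊤ : ℕ∞) T₁ := smooth_arc hGs hG0 hX₁s
  have hT₂s : ContDiff ℝ (⊤ : ℕ∞) T₂ := smooth_arc hGs hG0 hX₂s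
  have hKs : ContDiff ℝ (⊤ : ℕ∞) K := by
    rw [hK]; unfold signedCurv
    exact (hT₁s.mul (smooth_arc hGs hG0 hT₂s)).sub (hT₂s.mul (smooth_arc hGs hG0 hT₁s))
  have hSKs : ContDiff ℝ (⊤ : ℕ∞) (arcDeriv G K) := smooth_arc hGs hG0 hKs
  have dT₁ : ∀ v, DifferentiableAt ℝ T₁ v := fun v => hT₁s.differentiable (by simp) v
  have dT₂ : ∀ v, DifferentiableAt ℝ T₂ v := fun v => hT₂s.differentiable (by simp) v
  have dK : ∀ v, DifferentiableAt ℝ K v := fun v => hKs.differentiable (by simp) v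
  have dSK : ∀ v, DifferentiableAt ℝ (arcDeriv G K) v := fun v => hSKs.differentiable (by simp) v
  -- unit tangent
  have hunit : ∀ v, T₁ v ^ 2 + T₂ v ^ 2 = 1 := by
    intro v
    have h2 := hGsq v
    have h0 := hG0 v
    simp only [hT₁def, hT₂def, arcDeriv]
    field_simp
    linarith
  -- orthogonality
  have hortho : ∀ v, T₁ v * arcDeriv G T₁ v + T₂ v * arcDeriv G T₂ v = 0 := by
    intro v
    have hconst : (fun w => T₁ w ^ 2 + T₂ w ^ 2) = fun _ => (1 : ℝ) := funext hunit
    have h0 : deriv (fun w => T₁ w ^ 2 + T₂ w ^ 2) v = 0 := by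
      rw [hconst]; exact deriv_const v 1
    rw [deriv_fun_add ((dT₁ v).fun_pow 2) ((dT₂ v).fun_pow 2), deriv_fun_pow (dT₁ v) 2,
      deriv_fun_pow (dT₂ v) 2] at h0
    have hsum : T₁ v * deriv T₁ v + T₂ v * deriv T₂ v = 0 := by
      push_cast at h0; nlinarith [h0]
    have hh : T₁ v * (deriv T₁ v / G v) + T₂ v * (deriv T₂ v / G v)
        = (T₁ v * deriv T₁ v + T₂ v * deriv T₂ v) / G v := by ring
    show T₁ v * (deriv T₁ v / G v) + T₂ v * (deriv T₂ v / G v) = 0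
    rw [hh, hsum, zero_div]
  -- curvature formula
  have hKv : ∀ v, K v = T₁ v * arcDeriv G T₂ v - T₂ v * arcDeriv G T₁ v := by
    intro v; rw [hK]; rfl
  -- Frenet formulas
  have hF₁ : arcDeriv G T₁ = fun v => -(K v * T₂ v) := by
    funext v
    have h1 := hunit v; have h2 := hortho v; have h3 := hKv v
    linear_combination (-(arcDeriv G T₁ v)) * h1 + T₁ v * h2 + T₂ v * h3
  have hF₂ : arcDeriv G T₂ = fun v => K v * T₁ v := by
    funext v
    have h1 := hunit v; have h2 := hortho v; have h3 := hKv v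
    linear_combination (-(arcDeriv G T₂ v)) * h1 + T₂ v * h2 - T₁ v * h3
  -- third arclength derivative of X₁ (function level)
  have e3 : arcDeriv G (arcDeriv G T₁)
      = fun v => -(K v * (K v * T₁ v) + T₂ v * arcDeriv G K v) := by
    rw [hF₁]
    funext v
    have hn : arcDeriv G (fun w => -(K w * T₂ w)) v
        = -arcDeriv G (fun w => K w * T₂ w) v := arc_neg
    rw [hn, arc_mul (dK v) (dT₂ v), congrFun hF₂ v]
  -- fourth arclength derivative of X₁ at u
  have e4 : arcDeriv G (arcDeriv G (arcDeriv G T₁)) u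
      = -((K u * (K u * (-(K u * T₂ u)) + T₁ u * arcDeriv G K u)
            + (K u * T₁ u) * arcDeriv G K u)
          + (T₂ u * arcDeriv G (arcDeriv G K) u
            + arcDeriv G K u * (K u * T₁ u))) := by
    rw [e3]
    have hstep : arcDeriv G (fun v => -(K v * (K v * T₁ v) + T₂ v * arcDeriv G K v)) u
        = -arcDeriv G (fun v => K v * (K v * T₁ v) + T₂ v * arcDeriv G K v) u := arc_neg
    rw [hstep]
    have d1 : DifferentiableAt ℝ (fun v => K v * T₁ v) u := (dK u).mul (dT₁ u)
    have d2 : DifferentiableAt ℝ (fun v => K v * (K v * T₁ v)) u := (dK u).mul d1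
    have d3 : DifferentiableAt ℝ (fun v => T₂ v * arcDeriv G K v) u := (dT₂ u).mul (dSK u)
    rw [arc_add d2 d3, arc_mul (dK u) d1, arc_mul (dK u) (dT₁ u),
      arc_mul (dT₂ u) (dSK u), congrFun hF₁ u, congrFun hF₂ u]
  -- the term with the 3/2 factor at u
  have e32 : arcDeriv G (fun v => (K v) ^ 2 * T₁ v) u
      = K u ^ 2 * (-(K u * T₂ u)) + T₁ u * (2 * K u * arcDeriv G K u) := by
    rw [arc_mul ((dK u).fun_pow 2) (dT₁ u), arc_sq (dK u), congrFun hF₁ u]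
  rw [e4, e32]
  ring

/-- For a smooth family of plane curves `x = (x₁, x₂)`, 1-periodic in `u`, with
local length element `g = |∂_u x| > 0`, arclength derivative `∂_s = (1/g)∂_u`,
unit tangent `T = ∂_s x`, unit normal `N = T` rotated by `+π/2`, signed
curvature `k = ∂_s x ∧ ∂_s² x`, and smooth 1-periodic tangential velocity `α`,
at every point the equation `∂_t x = (−∂_s²k − (1/2)k³) N + α T` holds if and
only if `∂_t x = −∂_s⁴ x − (3/2) ∂_s(k² ∂_s x) + α ∂_s x` holds. -/
theorem willmore_position_equation_equivalence
    (T : ℝ) (hT : 0 < T) (x₁ x₂ α : ℝ → ℝ → ℝ)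
    (hx₁ : ContDiff ℝ (⊤ : ℕ∞) (Function.uncurry x₁))
    (hx₂ : ContDiff ℝ (⊤ : ℕ∞) (Function.uncurry x₂))
    (hα : ContDiff ℝ (⊤ : ℕ∞) (Function.uncurry α))
    (hx₁per : ∀ t, Function.Periodic (fun u => x₁ u t) 1)
    (hx₂per : ∀ t, Function.Periodic (fun u => x₂ u t) 1)
    (hαper : ∀ t, Function.Periodic (fun u => α u t) 1)
    (g : ℝ → ℝ → ℝ)
    (hgdef : ∀ u t, g u t =
      Real.sqrt ((deriv (fun v => x₁ v t) u) ^ 2 + (deriv (fun v => x₂ v t) u) ^ 2))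
    (hgpos : ∀ u t, 0 < g u t)
    (u t : ℝ) (ht : t ∈ Set.Ico (0:ℝ) T)
    (G X₁ X₂ K : ℝ → ℝ)
    (hG : G = fun v => g v t) (hX₁ : X₁ = fun v => x₁ v t) (hX₂ : X₂ = fun v => x₂ v t)
    (hK : K = signedCurv G X₁ X₂)
    (β : ℝ)
    (hβ : β = -(arcDeriv G (arcDeriv G K) u) - (1 / 2 : ℝ) * (K u) ^ 3) :
    (deriv (fun τ => x₁ u τ) t = β * (-(arcDeriv G X₂ u)) + α u t * arcDeriv G X₁ u ∧
     deriv (fun τ => x₂ u τ) t = β * (arcDeriv G X₁ u) + α u t * arcDeriv G X₂ u) ↔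
    (deriv (fun τ => x₁ u τ) t =
        -(arcDeriv G (arcDeriv G (arcDeriv G (arcDeriv G X₁))) u)
          - (3 / 2 : ℝ) * arcDeriv G (fun v => (K v) ^ 2 * arcDeriv G X₁ v) u
          + α u t * arcDeriv G X₁ u ∧
     deriv (fun τ => x₂ u τ) t =
        -(arcDeriv G (arcDeriv G (arcDeriv G (arcDeriv G X₂))) u)
          - (3 / 2 : ℝ) * arcDeriv G (fun v => (K v) ^ 2 * arcDeriv G X₂ v) u
          + α u t * arcDeriv G X₂ u) := by
  -- smoothness of the time slices
  have hX₁s : ContDiff ℝ (⊤ : ℕ∞) X₁ := by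
    rw [hX₁]
    have := hx₁.comp ((contDiff_id (E := ℝ)).prodMk (contDiff_const (c := t)))
    simpa [Function.comp_def, Function.uncurry] using this
  have hX₂s : ContDiff ℝ (⊤ : ℕ∞) X₂ := by
    rw [hX₂]
    have := hx₂.comp ((contDiff_id (E := ℝ)).prodMk (contDiff_const (c := t)))
    simpa [Function.comp_def, Function.uncurry] using this
  have hGpos : ∀ v, 0 < G v := by intro v; rw [hG]; exact hgpos v t
  have hGsq : ∀ v, G v ^ 2 = deriv X₁ v ^ 2 + deriv X₂ v ^ 2 := by
    intro v
    rw [hG, hX₁, hX₂]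
    simp only [hgdef v t]
    exact Real.sq_sqrt (by positivity)
  -- smoothness of G
  have hds : ContDiff ℝ (⊤ : ℕ∞) (fun v => deriv X₁ v ^ 2 + deriv X₂ v ^ 2) :=
    (((contDiff_infty_iff_deriv.mp hX₁s).2).pow 2).add
      (((contDiff_infty_iff_deriv.mp hX₂s).2).pow 2)
  have hspos : ∀ v, 0 < deriv X₁ v ^ 2 + deriv X₂ v ^ 2 := by
    intro v
    have := hGpos v
    nlinarith [hGsq v]
  have hGs : ContDiff ℝ (⊤ : ℕ∞) G := by
    have hGeq : G = fun v => Real.sqrt (deriv X₁ v ^ 2 + deriv X₂ v ^ 2) := by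
      funext v
      have h2 := hGsq v
      have := hGpos v
      nlinarith [Real.sqrt_nonneg (deriv X₁ v ^ 2 + deriv X₂ v ^ 2),
        Real.sq_sqrt (le_of_lt (hspos v))]
    rw [hGeq]
    rw [contDiff_iff_contDiffAt]
    intro v
    exact (Real.contDiffAt_sqrt (hspos v).ne').comp v hds.contDiffAt
  -- first component identity
  have key₁ := arc_key G X₁ X₂ K hGs hX₁s hX₂s hGpos hGsq hK u
  -- second component identity, by swapping the roles of X₁ and X₂
  have hK₂ : (fun v => -K v) = signedCurv G X₂ X₁ := by
    funext v; rw [hK]; simp only [signedCurv]; ring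
  have hGsq' : ∀ v, G v ^ 2 = deriv X₂ v ^ 2 + deriv X₁ v ^ 2 := by
    intro v; rw [hGsq v]; ring
  have key₂ := arc_key G X₂ X₁ (fun v => -K v) hGs hX₂s hX₁s hGpos hGsq' hK₂ u
  have hsqE : (fun v => (-K v) ^ 2 * arcDeriv G X₂ v)
      = (fun v => (K v) ^ 2 * arcDeriv G X₂ v) := by
    funext v; ring_nf
  have hnegfun : arcDeriv G (fun v => -K v) = fun v => -arcDeriv G K v := by
    funext v; exact arc_neg
  have hneg2 : arcDeriv G (arcDeriv G (fun v => -K v)) u = -arcDeriv G (arcDeriv G K) u := by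
    rw [hnegfun]
    exact arc_neg
  rw [hsqE, hneg2] at key₂
  -- assemble
  have E₁ : β * (-(arcDeriv G X₂ u)) + α u t * arcDeriv G X₁ u
      = -(arcDeriv G (arcDeriv G (arcDeriv G (arcDeriv G X₁))) u)
          - (3 / 2 : ℝ) * arcDeriv G (fun v => (K v) ^ 2 * arcDeriv G X₁ v) u
          + α u t * arcDeriv G X₁ u := by
    rw [hβ]; linear_combination -key₁
  have E₂ : β * (arcDeriv G X₁ u) + α u t * arcDeriv G X₂ u
      = -(arcDeriv G (arcDeriv G (arcDeriv G (arcDeriv G X₂))) u)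
          - (3 / 2 : ℝ) * arcDeriv G (fun v => (K v) ^ 2 * arcDeriv G X₂ v) u
          + α u t * arcDeriv G X₂ u := by
    rw [hβ]; linear_combination -key₂
  rw [E₁, E₂]
end
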